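/- Let U be an open subset of the half-plane {(ρ,z) ∈ ℝ² : ρ > 0} and let σ, ω : U → ℝ be twice continuously differentiable functions satisfying the reduced vacuum Einstein equations Δσ = −e^{−2σ}(ω_ρ² + ω_z²)/ρ⁴ and Δω = 4ω_ρ/ρ + 2(ω_ρσ_ρ + ω_zσ_z) on U. Set η = ρ²e^σ and define P(ρ,z) = (ρ/4)(σ_ρ² − σ_z²) + (ρ/(4η²))(ω_ρ² − ω_z²) and Q(ρ,z) = (ρ/2)(σ_ρσ_z + η^{−2}ω_ρω_z). Then the 1-form P dρ + Q dz is closed on U, i.e. ∂_z P = ∂_ρ Q at every point of U. -/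

import Mathlib

/-- Partial derivative with respect to the first (ρ) variable. -/
noncomputable def pdr (f : ℝ × ℝ → ℝ) (p : ℝ × ℝ) : ℝ :=
  deriv (fun x => f (x, p.2)) p.1

/-- Partial derivative with respect to the second (z) variable. -/
noncomputable def pdz (f : ℝ × ℝ → ℝ) (p : ℝ × ℝ) : ℝ :=
  deriv (fun y => f (p.1, y)) p.2


lemma pdr_eq_fderiv {f : ℝ × ℝ → ℝ} {p : ℝ × ℝ} (h : DifferentiableAt ℝ f p) :
    pdr f p = fderiv ℝ f p (1, 0) := by
  have hl : HasDerivAt (fun x : ℝ => (x, p.2)) ((1 : ℝ), (0 : ℝ)) p.1 :=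
    (hasDerivAt_id p.1).prodMk (hasDerivAt_const p.1 p.2)
  exact (h.hasFDerivAt.comp_hasDerivAt p.1 hl).deriv

lemma pdz_eq_fderiv {f : ℝ × ℝ → ℝ} {p : ℝ × ℝ} (h : DifferentiableAt ℝ f p) :
    pdz f p = fderiv ℝ f p (0, 1) := by
  have hl : HasDerivAt (fun y : ℝ => (p.1, y)) ((0 : ℝ), (1 : ℝ)) p.2 :=
    (hasDerivAt_const p.2 p.1).prodMk (hasDerivAt_id p.2)
  exact (h.hasFDerivAt.comp_hasDerivAt p.2 hl).deriv

lemma pdr_eventually_eq {U : Set (ℝ × ℝ)} (hU : IsOpen U) {f : ℝ × ℝ → ℝ}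
    (hf : ∀ q ∈ U, DifferentiableAt ℝ f q) {p : ℝ × ℝ} (hp : p ∈ U) :
    pdr f =ᶠ[nhds p] fun q => fderiv ℝ f q (1, 0) := by
  filter_upwards [hU.mem_nhds hp] with q hq
  exact pdr_eq_fderiv (hf q hq)

lemma pdz_eventually_eq {U : Set (ℝ × ℝ)} (hU : IsOpen U) {f : ℝ × ℝ → ℝ}
    (hf : ∀ q ∈ U, DifferentiableAt ℝ f q) {p : ℝ × ℝ} (hp : p ∈ U) :
    pdz f =ᶠ[nhds p] fun q => fderiv ℝ f q (0, 1) := by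
  filter_upwards [hU.mem_nhds hp] with q hq
  exact pdz_eq_fderiv (hf q hq)

lemma c2_bundle {U : Set (ℝ × ℝ)} (hU : IsOpen U) {f : ℝ × ℝ → ℝ}
    (hf : ContDiffOn ℝ 2 f U) {p : ℝ × ℝ} (hp : p ∈ U) :
    DifferentiableAt ℝ (pdr f) p ∧ DifferentiableAt ℝ (pdz f) p ∧
      pdz (pdr f) p = pdr (pdz f) p := by
  have hfa : ContDiffAt ℝ 2 f p := hf.contDiffAt (hU.mem_nhds hp)
  have hfd : ∀ q ∈ U, DifferentiableAt ℝ f q := fun q hq =>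
    ((hf.contDiffAt (hU.mem_nhds hq)).differentiableAt (by norm_num))
  have hfd1 : ContDiffAt ℝ 1 (fderiv ℝ f) p := hfa.fderiv_right (by norm_num)
  have hD1 : DifferentiableAt ℝ (fun q => fderiv ℝ f q ((1 : ℝ), (0 : ℝ))) p :=
    (hfd1.clm_apply contDiffAt_const).differentiableAt one_ne_zero
  have hD2 : DifferentiableAt ℝ (fun q => fderiv ℝ f q ((0 : ℝ), (1 : ℝ))) p :=
    (hfd1.clm_apply contDiffAt_const).differentiableAt one_ne_zero
  have hfdd : DifferentiableAt ℝ (fderiv ℝ f) p := hfd1.differentiableAt one_ne_zero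
  have hev1 := pdr_eventually_eq hU hfd hp
  have hev2 := pdz_eventually_eq hU hfd hp
  refine ⟨(hev1.differentiableAt_iff).mpr hD1, (hev2.differentiableAt_iff).mpr hD2, ?_⟩
  have hsymm : IsSymmSndFDerivAt ℝ f p := hfa.isSymmSndFDerivAt (by norm_num)
  have e1 : pdz (pdr f) p = pdz (fun q => fderiv ℝ f q ((1:ℝ), (0:ℝ))) p := by
    unfold pdz
    apply Filter.EventuallyEq.deriv_eq
    exact hev1.comp_tendsto ((Continuous.prodMk_right p.1).tendsto p.2)
  have e2 : pdr (pdz f) p = pdr (fun q => fderiv ℝ f q ((0:ℝ), (1:ℝ))) p := by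
    unfold pdr
    apply Filter.EventuallyEq.deriv_eq
    exact hev2.comp_tendsto (((continuous_id.prodMk continuous_const)).tendsto p.1)
  rw [e1, e2, pdz_eq_fderiv hD1, pdr_eq_fderiv hD2,
      fderiv_clm_apply hfdd (differentiableAt_const _),
      fderiv_clm_apply hfdd (differentiableAt_const _)]
  simp [hsymm (0,1) (1,0)]

lemma hasDerivAt_line_r {f : ℝ × ℝ → ℝ} {p : ℝ × ℝ} (hf : DifferentiableAt ℝ f p) :
    HasDerivAt (fun x => f (x, p.2)) (pdr f p) p.1 := by
  have h : DifferentiableAt ℝ (fun x => f (x, p.2)) p.1 :=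
    hf.comp p.1 (differentiableAt_id.prodMk (differentiableAt_const _))
  exact h.hasDerivAt

lemma hasDerivAt_line_z {f : ℝ × ℝ → ℝ} {p : ℝ × ℝ} (hf : DifferentiableAt ℝ f p) :
    HasDerivAt (fun y => f (p.1, y)) (pdz f p) p.2 := by
  have h : DifferentiableAt ℝ (fun y => f (p.1, y)) p.2 :=
    hf.comp p.2 ((differentiableAt_const _).prodMk differentiableAt_id)
  exact h.hasDerivAt

/-- The flat cylindrically symmetric Laplacian Δ = ∂²_ρ + (1/ρ)∂_ρ + ∂²_z. -/
noncomputable def lap (f : ℝ × ℝ → ℝ) (p : ℝ × ℝ) : ℝ :=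
  pdr (pdr f) p + pdr f p / p.1 + pdz (pdz f) p

/-- for a C² solution (σ, ω) of the reduced vacuum Einstein equations
on an open subset of the half-plane {ρ > 0}, the 1-form P dρ + Q dz defining the
metric function q is closed: ∂_z P = ∂_ρ Q. -/
theorem closedness_of_q_oneform
    (U : Set (ℝ × ℝ)) (hU : IsOpen U) (hUpos : ∀ p ∈ U, 0 < p.1)
    (σ ω : ℝ × ℝ → ℝ)
    (hσ : ContDiffOn ℝ 2 σ U) (hω : ContDiffOn ℝ 2 ω U)
    (heqσ : ∀ p ∈ U, lap σ p =
      - Real.exp (-2 * σ p) * ((pdr ω p) ^ 2 + (pdz ω p) ^ 2) / p.1 ^ 4)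
    (heqω : ∀ p ∈ U, lap ω p =
      4 * pdr ω p / p.1 + 2 * (pdr ω p * pdr σ p + pdz ω p * pdz σ p))
    (η P Q : ℝ × ℝ → ℝ)
    (hη : ∀ p, η p = p.1 ^ 2 * Real.exp (σ p))
    (hP : ∀ p, P p = p.1 / 4 * ((pdr σ p) ^ 2 - (pdz σ p) ^ 2)
        + p.1 / (4 * (η p) ^ 2) * ((pdr ω p) ^ 2 - (pdz ω p) ^ 2))
    (hQ : ∀ p, Q p = p.1 / 2 * (pdr σ p * pdz σ p + pdr ω p * pdz ω p / (η p) ^ 2)) :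
    ∀ p ∈ U, pdz P p = pdr Q p := by
  intro p hp
  have hr : 0 < p.1 := hUpos p hp
  have hσd : DifferentiableAt ℝ σ p :=
    (hσ.contDiffAt (hU.mem_nhds hp)).differentiableAt (by norm_num)
  have hωd : DifferentiableAt ℝ ω p :=
    (hω.contDiffAt (hU.mem_nhds hp)).differentiableAt (by norm_num)
  obtain ⟨hσr, hσz, hσcl⟩ := c2_bundle hU hσ hp
  obtain ⟨hωr, hωz, hωcl⟩ := c2_bundle hU hω hp
  -- z-direction line derivatives
  have Hσ := hasDerivAt_line_z hσd
  have H1 := hasDerivAt_line_z hσr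
  have H2 := hasDerivAt_line_z hσz
  have H3 := hasDerivAt_line_z hωr
  have H4 := hasDerivAt_line_z hωz
  -- r-direction line derivatives
  have Gσ := hasDerivAt_line_r hσd
  have G1 := hasDerivAt_line_r hσr
  have G2 := hasDerivAt_line_r hσz
  have G3 := hasDerivAt_line_r hωr
  have G4 := hasDerivAt_line_r hωz
  have hne : ∀ x : ℝ, Real.exp x ≠ 0 := Real.exp_ne_zero
  have hneP : (4 : ℝ) * (p.1 ^ 2 * Real.exp (σ (p.1, p.2))) ^ 2 ≠ 0 :=
    mul_ne_zero (by norm_num)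
      (pow_ne_zero _ (mul_ne_zero (pow_ne_zero _ hr.ne') (hne _)))
  have hneQ : (p.1 ^ 2 * Real.exp (σ (p.1, p.2))) ^ 2 ≠ 0 :=
    pow_ne_zero _ (mul_ne_zero (pow_ne_zero _ hr.ne') (hne _))
  -- derivative of P along the vertical line
  have HDP := ((((H1.pow 2).sub (H2.pow 2)).const_mul (p.1 / 4)).add
    (((hasDerivAt_const p.2 p.1).div
        ((((hasDerivAt_const p.2 (p.1 ^ 2)).mul Hσ.exp).pow 2).const_mul 4) hneP).mul
      ((H3.pow 2).sub (H4.pow 2))))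
  have hevP : (fun y => P (p.1, y)) =ᶠ[nhds p.2]
      (fun y => p.1 / 4 * (pdr σ (p.1, y) ^ 2 - pdz σ (p.1, y) ^ 2) +
        p.1 / (4 * (p.1 ^ 2 * Real.exp (σ (p.1, y))) ^ 2) *
          (pdr ω (p.1, y) ^ 2 - pdz ω (p.1, y) ^ 2)) :=
    Filter.Eventually.of_forall (fun y => by simp only [hP, hη])
  have HDP' := HDP.congr_of_eventuallyEq hevP
  -- derivative of Q along the horizontal line
  have HDQ := ((hasDerivAt_id' (x := p.1)).div_const 2).mul
    ((G1.mul G2).add ((G3.mul G4).div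
      (((hasDerivAt_pow 2 p.1).mul Gσ.exp).pow 2) hneQ))
  have hevQ : (fun x => Q (x, p.2)) =ᶠ[nhds p.1]
      (fun x => x / 2 * (pdr σ (x, p.2) * pdz σ (x, p.2) +
        pdr ω (x, p.2) * pdz ω (x, p.2) / (x ^ 2 * Real.exp (σ (x, p.2))) ^ 2)) :=
    Filter.Eventually.of_forall (fun x => by simp only [hQ, hη])
  have HDQ' := HDQ.congr_of_eventuallyEq hevQ
  have harr : pdr (pdr σ) p =
      - Real.exp (-2 * σ p) * ((pdr ω p) ^ 2 + (pdz ω p) ^ 2) / p.1 ^ 4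
        - pdr σ p / p.1 - pdz (pdz σ) p := by
    have h := heqσ p hp; unfold lap at h; linarith
  have hczz : pdz (pdz ω) p =
      4 * pdr ω p / p.1 + 2 * (pdr ω p * pdr σ p + pdz ω p * pdz σ p)
        - pdr (pdr ω) p - pdr ω p / p.1 := by
    have h := heqω p hp; unfold lap at h; linarith
  have hexp2 : Real.exp (-2 * σ p) = (Real.exp (σ p))⁻¹ * (Real.exp (σ p))⁻¹ := by
    rw [← Real.exp_neg, ← Real.exp_add]; ring_nf
  unfold pdz pdr
  rw [HDP'.deriv, HDQ'.deriv]
  simp only [Prod.mk.eta, Pi.mul_apply, Pi.pow_apply, Pi.add_apply, Pi.sub_apply, Pi.div_apply, Nat.cast_ofNat]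
  rw [← hσcl, ← hωcl, harr, hczz, hexp2]
  have he := hne (σ p)
  field_simp
  ring
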